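/- Let n ≥ 1, let Σ be an n×n real symmetric positive semidefinite matrix and Ω an n×n real symmetric positive definite matrix. For every invertible real n×n matrix L with L Lᵀ = Ω, one has (L⁻¹)ᵀ · √(Lᵀ Σ L) · L⁻¹ = Λ_kyle(Σ,Ω). In particular, the matrix (L⁻¹)ᵀ √(Lᵀ Σ L) L⁻¹ does not depend on the choice of the factorization L of Ω. -/

import Mathlib

open Matrix
open scoped Classical

/-- `sqrtm A` is the unique symmetric positive semidefinite square root of a
symmetric positive semidefinite real matrix `A` (junk value `0` otherwise). -/
noncomputable def sqrtm {n : ℕ} (A : Matrix (Fin n) (Fin n) ℝ) : Matrix (Fin n) (Fin n) ℝ :=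
  if h : A.PosSemidef then
    (h.1.eigenvectorUnitary : Matrix (Fin n) (Fin n) ℝ) *
      diagonal ((↑) ∘ (√·) ∘ h.1.eigenvalues) *
      (star h.1.eigenvectorUnitary : Matrix (Fin n) (Fin n) ℝ)
  else 0

section SqrtPort
open scoped MatrixOrder

noncomputable def Matrix.PosSemidef.sqrt {n : ℕ} {A : Matrix (Fin n) (Fin n) ℝ}
    (_h : A.PosSemidef) : Matrix (Fin n) (Fin n) ℝ := CFC.sqrt A

theorem Matrix.PosSemidef.posSemidef_sqrt {n : ℕ} {A : Matrix (Fin n) (Fin n) ℝ}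
    (h : A.PosSemidef) : h.sqrt.PosSemidef :=
  nonneg_iff_posSemidef.mp (CFC.sqrt_nonneg A)

theorem Matrix.PosSemidef.sqrt_mul_self {n : ℕ} {A : Matrix (Fin n) (Fin n) ℝ}
    (h : A.PosSemidef) : h.sqrt * h.sqrt = A :=
  CFC.sqrt_mul_sqrt_self A h.nonneg

theorem Matrix.PosSemidef.eq_sqrt_of_sq_eq {n : ℕ} {A B : Matrix (Fin n) (Fin n) ℝ}
    (hB : B.PosSemidef) (hA : A.PosSemidef) (hBA : B ^ 2 = A) : B = hA.sqrt :=
  (CFC.sqrt_unique (by rw [← pow_two]; exact hBA) hB.nonneg).symm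

theorem sqrtm_eq {n : ℕ} {A : Matrix (Fin n) (Fin n) ℝ} (h : A.PosSemidef) :
    sqrtm A = h.sqrt := by
  rw [sqrtm, dif_pos h, Matrix.PosSemidef.sqrt, CFC.sqrt_eq_cfc, cfc_nnreal_eq_real _ A,
    h.1.cfc_eq]
  simp only [IsHermitian.cfc, Unitary.conjStarAlgAut_apply]
  congr 3
  funext i
  simp [Real.coe_sqrt, Real.coe_toNNReal', max_eq_left (h.eigenvalues_nonneg i)]

end SqrtPort

/-- The Kyle cross-impact matrix `Λ_kyle(Σ,Ω) = (√Ω)⁻¹ √(√Ω Σ √Ω) (√Ω)⁻¹`. -/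
noncomputable def kyle {n : ℕ} (S W : Matrix (Fin n) (Fin n) ℝ) : Matrix (Fin n) (Fin n) ℝ :=
  (sqrtm W)⁻¹ * sqrtm (sqrtm W * S * sqrtm W) * (sqrtm W)⁻¹

/-- `(L⁻¹)ᵀ √(Lᵀ Σ L) L⁻¹` does not depend on the factorization `L Lᵀ = Ω`
and equals the Kyle matrix. -/
theorem kyle_factorization_independent {n : ℕ} (hn : 1 ≤ n)
    (S W : Matrix (Fin n) (Fin n) ℝ) (hS : S.PosSemidef) (hW : W.PosDef)
    (L : Matrix (Fin n) (Fin n) ℝ) (hL : IsUnit L.det) (hLW : L * Lᵀ = W) :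
    (L⁻¹)ᵀ * sqrtm (Lᵀ * S * L) * L⁻¹ = kyle S W := by
  have hWpsd : W.PosSemidef := hW.posSemidef
  set Q := hWpsd.sqrt with hQdef
  have hQpsd : Q.PosSemidef := hWpsd.posSemidef_sqrt
  have hQherm : Qᴴ = Q := hQpsd.isHermitian
  have hQsym : Qᵀ = Q := by rwa [conjTranspose_eq_transpose_of_trivial] at hQherm
  have hQQ : Q * Q = W := hWpsd.sqrt_mul_self
  have hQdet : IsUnit Q.det := by
    refine isUnit_iff_ne_zero.mpr fun h => ?_
    have : W.det = 0 := by rw [← hQQ, det_mul, h, mul_zero]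
    exact hW.det_pos.ne' this
  set U := Q⁻¹ * L with hUdef
  have hUt : Uᵀ = Lᵀ * Q⁻¹ := by
    rw [hUdef, transpose_mul, transpose_nonsing_inv, hQsym]
  have hUUt : U * Uᵀ = 1 := by
    rw [hUdef, hUt]
    calc Q⁻¹ * L * (Lᵀ * Q⁻¹) = Q⁻¹ * (L * Lᵀ) * Q⁻¹ := by
          simp only [Matrix.mul_assoc]
      _ = Q⁻¹ * (Q * Q) * Q⁻¹ := by rw [hLW, hQQ]
      _ = 1 := by
          rw [← Matrix.mul_assoc, Matrix.nonsing_inv_mul _ hQdet, Matrix.one_mul,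
            Matrix.mul_nonsing_inv _ hQdet]
  have hUtU : Uᵀ * U = 1 := mul_eq_one_comm.mp hUUt
  have hM : (Q * S * Q).PosSemidef := by
    have := hS.mul_mul_conjTranspose_same Q
    rwa [hQherm] at this
  have hLdecomp : L = Q * U := by
    rw [hUdef, ← Matrix.mul_assoc, Matrix.mul_nonsing_inv _ hQdet, Matrix.one_mul]
  have hLSL : Lᵀ * S * L = Uᵀ * (Q * S * Q) * U := by
    rw [hLdecomp, transpose_mul, hQsym]
    simp only [Matrix.mul_assoc]
  have hLSLpsd : (Lᵀ * S * L).PosSemidef := by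
    have := hS.conjTranspose_mul_mul_same L
    rwa [conjTranspose_eq_transpose_of_trivial] at this
  set B := Uᵀ * hM.sqrt * U with hBdef
  have hBpsd : B.PosSemidef := by
    have := hM.posSemidef_sqrt.conjTranspose_mul_mul_same U
    rwa [conjTranspose_eq_transpose_of_trivial] at this
  have hBsq : B ^ 2 = Lᵀ * S * L := by
    rw [hLSL, pow_two, hBdef]
    calc Uᵀ * hM.sqrt * U * (Uᵀ * hM.sqrt * U)
        = Uᵀ * hM.sqrt * (U * Uᵀ) * hM.sqrt * U := by simp only [Matrix.mul_assoc]
      _ = Uᵀ * (hM.sqrt * hM.sqrt) * U := by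
          rw [hUUt, Matrix.mul_one]; simp only [Matrix.mul_assoc]
      _ = Uᵀ * (Q * S * Q) * U := by rw [hM.sqrt_mul_self]
  have hBeq : B = hLSLpsd.sqrt := hBpsd.eq_sqrt_of_sq_eq hLSLpsd hBsq
  have hsqrtmLSL : sqrtm (Lᵀ * S * L) = B := by
    rw [sqrtm_eq hLSLpsd, ← hBeq]
  have hsqrtmW : sqrtm W = Q := by rw [sqrtm_eq hWpsd]
  have hUL : U * L⁻¹ = Q⁻¹ := by
    rw [hUdef, Matrix.mul_assoc, Matrix.mul_nonsing_inv _ hL, Matrix.mul_one]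
  have hLU : (L⁻¹)ᵀ * Uᵀ = Q⁻¹ := by
    rw [← transpose_mul, hUL, transpose_nonsing_inv, hQsym]
  rw [hsqrtmLSL, hBdef, kyle, hsqrtmW]
  calc (L⁻¹)ᵀ * (Uᵀ * hM.sqrt * U) * L⁻¹
      = ((L⁻¹)ᵀ * Uᵀ) * hM.sqrt * (U * L⁻¹) := by simp only [Matrix.mul_assoc]
    _ = Q⁻¹ * hM.sqrt * Q⁻¹ := by rw [hLU, hUL]
    _ = Q⁻¹ * sqrtm (Q * S * Q) * Q⁻¹ := by rw [sqrtm_eq hM]
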